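/- With the generalized quantum walk setup below, set p = Σ_{k∈M} σ_k. Let 𝒟_{−M} = S₀ Ξ T₀ᵀ be a real singular value decomposition of the principal submatrix of the generalized discriminant 𝒟 on unmarked indices (S₀, T₀ real orthogonal, Ξ diagonal with entries ξ_1,…,ξ_{n−m} ∈ [0,1]), assume ξ_k < 1 for all k, define θ̃_k ∈ (0, π/2] by cos θ̃_k = ξ_k, and set ν = S₀ᵀ √σ_{−M}. Then for every natural number T with T ≥ (64/(1−p)) Σ_{k=1}^{n−m} ν_k²/θ̃_k, one has F_σ(T) ≥ 1 − p; in particular the generalized quantum hitting time QH_{σ,M} := min{T ∈ ℕ : F_σ(T) ≥ 1 − p} satisfies QH_{σ,M} ≤ (64/(1−p)) Σ_{k=1}^{n−m} ν_k²/θ̃_k. -/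

import Mathlib

open Matrix

lemma sum_dite_notmem' {α : Type*} [Fintype α] [DecidableEq α] (M : Finset α) {β : Type*}
    [AddCommMonoid β] (f : {i : α // i ∉ M} → β) :
    ∑ x : α, (if h : x ∉ M then f ⟨x, h⟩ else 0) = ∑ k, f k := by
  classical
  rw [← Finset.sum_add_sum_compl M]
  have h1 : ∑ x ∈ M, (if h : x ∉ M then f ⟨x, h⟩ else 0) = 0 :=
    Finset.sum_eq_zero fun x hx => dif_neg (not_not_intro hx)
  rw [h1, zero_add, Finset.sum_subtype Mᶜ (fun x => Finset.mem_compl)]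
  exact Finset.sum_congr rfl fun x _ => dif_pos x.2

lemma cos_sum_le' (θ : ℝ) (h0 : 0 < θ) (h2 : θ ≤ Real.pi / 2) (N : ℕ) :
    ∑ t ∈ Finset.range N, Real.cos (2 * θ * t) ≤ 1 / Real.sin θ := by
  have hsin : 0 < Real.sin θ := Real.sin_pos_of_pos_of_lt_pi h0
    (lt_of_le_of_lt h2 (by linarith [Real.pi_pos]))
  set z : ℂ := Complex.exp ((2 * θ : ℝ) * Complex.I) with hz
  have hzt : ∀ t : ℕ, z ^ t = Complex.exp ((2 * θ * t : ℝ) * Complex.I) := by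
    intro t
    rw [hz, ← Complex.exp_nat_mul]
    congr 1
    push_cast
    ring
  have hzt2 : ∀ t : ℕ, z ^ t
      = ((Real.cos (2*θ*t) : ℝ) : ℂ) + ((Real.sin (2*θ*t) : ℝ) : ℂ) * Complex.I := by
    intro t
    rw [hzt t, Complex.exp_mul_I, Complex.ofReal_cos, Complex.ofReal_sin]
  have hre : ∀ t : ℕ, (z ^ t).re = Real.cos (2 * θ * t) := by
    intro t
    rw [hzt2 t]
    simp only [Complex.add_re, Complex.ofReal_re, Complex.mul_re, Complex.I_re, Complex.I_im,
      Complex.ofReal_im]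
    ring
  have habs : ‖∑ t ∈ Finset.range N, z ^ t‖ ≤ 1 / Real.sin θ := by
    have hzabs : ‖z ^ N - 1‖ ≤ 2 := by
      have h1 := norm_sub_le (z ^ N) 1
      have h2' : ‖z ^ N‖ = 1 := by
        rw [hzt N]; exact Complex.norm_exp_ofReal_mul_I _
      rw [h2'] at h1
      have hone : ‖(1:ℂ)‖ = 1 := norm_one
      linarith
    have hgeom := geom_sum_mul z N
    have hz1 : ‖z - 1‖ = 2 * Real.sin θ := by
      have hzz : z - 1 = ((Real.cos (2*θ) - 1 : ℝ) : ℂ) + ((Real.sin (2*θ) : ℝ) : ℂ) * Complex.I := by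
        have := hzt2 1
        rw [pow_one] at this
        rw [this]
        push_cast
        ring_nf
      rw [hzz]
      have h1 : ‖((Real.cos (2*θ) - 1 : ℝ) : ℂ) + ((Real.sin (2*θ) : ℝ) : ℂ) * Complex.I‖ ^ 2
          = (Real.cos (2*θ) - 1)^2 + (Real.sin (2*θ))^2 := by
        rw [Complex.sq_norm, Complex.normSq_add_mul_I]
      have h2'' : (Real.cos (2*θ) - 1)^2 + (Real.sin (2*θ))^2 = (2 * Real.sin θ)^2 := by
        have hc2 : Real.cos (2*θ) = 1 - 2 * Real.sin θ ^ 2 := by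
          rw [Real.cos_two_mul]
          nlinarith [Real.sin_sq_add_cos_sq θ]
        nlinarith [Real.sin_sq_add_cos_sq (2*θ)]
      nlinarith [norm_nonneg (((Real.cos (2*θ) - 1 : ℝ) : ℂ) + ((Real.sin (2*θ) : ℝ) : ℂ) * Complex.I)]
    have hpos : (0:ℝ) < 2 * Real.sin θ := by positivity
    have habs2 : ‖∑ t ∈ Finset.range N, z ^ t‖ * (2 * Real.sin θ) ≤ 2 := by
      rw [← hz1, ← norm_mul, hgeom]
      exact hzabs
    have h3 := (le_div_iff₀ hpos).2 habs2
    calc ‖∑ t ∈ Finset.range N, z ^ t‖ ≤ 2 / (2 * Real.sin θ) := h3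
      _ = 1 / Real.sin θ := by field_simp
  calc ∑ t ∈ Finset.range N, Real.cos (2 * θ * t)
      = (∑ t ∈ Finset.range N, z ^ t).re := by
        rw [Complex.re_sum]
        exact Finset.sum_congr rfl fun t _ => (hre t).symm
    _ ≤ ‖∑ t ∈ Finset.range N, z ^ t‖ := Complex.re_le_norm _
    _ ≤ 1 / Real.sin θ := habs

lemma dot_helper' {m' n' : Type*} [Fintype m'] [Fintype n'] (Mm Nn : Matrix m' n' ℂ)
    (x y : n' → ℂ) :
    star (Mm *ᵥ x) ⬝ᵥ (Nn *ᵥ y) = star x ⬝ᵥ ((Mmᴴ * Nn) *ᵥ y) := by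
  rw [Matrix.star_mulVec, ← Matrix.mulVec_mulVec, Matrix.dotProduct_mulVec (star x) Mmᴴ]

lemma sum_fst_ite' {n : ℕ} (x : Fin n) (f : Fin n → ℂ) :
    ∑ q : Fin n × Fin n, (if q.1 = x then f q.2 else 0) = ∑ b, f b := by
  rw [Fintype.sum_prod_type]
  rw [Finset.sum_eq_single x]
  · simp
  · intro a _ ha
    simp [ha]
  · simp

lemma sum_snd_ite' {n : ℕ} (y : Fin n) (f : Fin n → ℂ) :
    ∑ q : Fin n × Fin n, (if q.2 = y then f q.1 else 0) = ∑ a, f a := by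
  rw [Fintype.sum_prod_type_right]
  rw [Finset.sum_eq_single y]
  · simp
  · intro a _ ha
    simp [ha]
  · simp

lemma dot_helper2' {m' n' : Type*} [Fintype m'] [Fintype n'] (Mm : Matrix m' n' ℂ)
    (x : n' → ℂ) (y : m' → ℂ) :
    star (Mm *ᵥ x) ⬝ᵥ y = star x ⬝ᵥ (Mmᴴ *ᵥ y) := by
  rw [Matrix.star_mulVec, ← Matrix.dotProduct_mulVec]

set_option maxHeartbeats 1000000 in
theorem stmt19 (n : ℕ) (hn : 0 < n)
    (P : Matrix (Fin n) (Fin n) ℝ)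
    (hP0 : ∀ i j, 0 ≤ P i j) (hP1 : ∀ i, ∑ j, P i j = 1)
    (σ : Fin n → ℝ) (hσ0 : ∀ i, 0 < σ i) (hσ1 : ∑ i, σ i = 1)
    (hPcol : ∀ j, ∃ i, P i j ≠ 0)
    (r : Fin n → ℝ) (hr : ∀ y, r y = ∑ x, σ x * P x y / σ y)
    (Pstar : Matrix (Fin n) (Fin n) ℝ)
    (hPstar : ∀ y x, Pstar y x = (σ x * P x y / σ y) / r y)
    (𝒟 : Matrix (Fin n) (Fin n) ℝ)
    (h𝒟 : ∀ x y, 𝒟 x y = Real.sqrt (P x y * Pstar y x))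
    (M : Finset (Fin n)) (hM : M.Nonempty) (hM' : M ≠ Finset.univ)
    (Atil Btil : Matrix (Fin n × Fin n) (Fin n) ℂ)
    (hAtil : ∀ q x', Atil q x' = if x' ∈ M then (if q = (x', x') then 1 else 0)
        else (if q.1 = x' then (Real.sqrt (P q.1 q.2) : ℂ) else 0))
    (hBtil : ∀ q y', Btil q y' = if y' ∈ M then (if q = (y', y') then 1 else 0)
        else (if q.2 = y' then (Real.sqrt (Pstar q.2 q.1) : ℂ) else 0))
    (Wtil : Matrix (Fin n × Fin n) (Fin n × Fin n) ℂ)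
    (hWtil : Wtil = ((2 : ℂ) • (Btil * Btilᴴ) - 1) * ((2 : ℂ) • (Atil * Atilᴴ) - 1))
    (ξ₀ : Fin n × Fin n → ℂ)
    (hξ₀ : ∀ q, ξ₀ q = (Real.sqrt (σ q.1 * P q.1 q.2) : ℂ))
    (Fσ : ℕ → ℝ)
    (hFσ : ∀ T, Fσ T = (1 / ((T : ℝ) + 1)) * ∑ t ∈ Finset.range (T + 1),
        ∑ q, ‖((Wtil ^ t) *ᵥ ξ₀ - ξ₀) q‖ ^ 2)
    (p : ℝ) (hp : p = ∑ k ∈ M, σ k)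
    (Dm : Matrix {i : Fin n // i ∉ M} {i : Fin n // i ∉ M} ℝ)
    (hDm : Dm = 𝒟.submatrix Subtype.val Subtype.val)
    (S₀ T₀ : Matrix {i : Fin n // i ∉ M} {i : Fin n // i ∉ M} ℝ)
    (hS₀ : S₀ * S₀ᵀ = 1) (hT₀ : T₀ * T₀ᵀ = 1)
    (ξ : {i : Fin n // i ∉ M} → ℝ)
    (hsvd : Dm = S₀ * Matrix.diagonal ξ * T₀ᵀ)
    (hξ : ∀ k, 0 ≤ ξ k ∧ ξ k < 1)
    (θ : {i : Fin n // i ∉ M} → ℝ)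
    (hθ : ∀ k, 0 < θ k ∧ θ k ≤ Real.pi / 2)
    (hcos : ∀ k, Real.cos (θ k) = ξ k)
    (ν : {i : Fin n // i ∉ M} → ℝ)
    (hν : ν = S₀ᵀ *ᵥ fun i => Real.sqrt (σ i.1)) :
    (∀ T : ℕ, (T : ℝ) ≥ 64 / (1 - p) * ∑ k, ν k ^ 2 / θ k → Fσ T ≥ 1 - p) ∧
    ((↑(sInf {T : ℕ | Fσ T ≥ 1 - p}) : ℝ) ≤ 64 / (1 - p) * ∑ k, ν k ^ 2 / θ k) := by
  classical
  -- basic positivity facts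
  have hrpos : ∀ y, 0 < r y := by
    intro y
    rw [hr]
    obtain ⟨x0, hx0⟩ := hPcol y
    have hx0' : 0 < P x0 y := lt_of_le_of_ne (hP0 x0 y) (Ne.symm hx0)
    apply Finset.sum_pos'
    · intro i _
      exact div_nonneg (mul_nonneg (hσ0 i).le (hP0 i y)) (hσ0 y).le
    · exact ⟨x0, Finset.mem_univ _, div_pos (mul_pos (hσ0 x0) hx0') (hσ0 y)⟩
  have hPs0 : ∀ y x, 0 ≤ Pstar y x := by
    intro y x
    rw [hPstar]
    have := hσ0 x; have := hσ0 y; have := hP0 x y; have := hrpos y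
    positivity
  have hPsrow : ∀ y, ∑ x, Pstar y x = 1 := by
    intro y
    calc ∑ x, Pstar y x = ∑ x, (σ x * P x y / σ y) / r y :=
          Finset.sum_congr rfl fun x _ => hPstar y x
      _ = (∑ x, σ x * P x y / σ y) / r y := by rw [← Finset.sum_div]
      _ = r y / r y := by rw [← hr]
      _ = 1 := div_self (ne_of_gt (hrpos y))
  -- 1 - p > 0
  obtain ⟨i0, hi0⟩ : ∃ i0 : Fin n, i0 ∉ M := by
    by_contra h
    push_neg at h
    exact hM' (Finset.eq_univ_iff_forall.2 h)
  have hplt : p < 1 := by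
    rw [hp, ← hσ1]
    exact Finset.sum_lt_sum_of_subset (Finset.subset_univ M) (Finset.mem_univ i0) hi0
      (hσ0 i0) (fun j _ _ => le_of_lt (hσ0 j))
  have h1p : 0 < 1 - p := by linarith
  -- sum of sigma over unmarked
  have hσsub : ∑ k : {i : Fin n // i ∉ M}, σ k.1 = 1 - p := by
    have h2 := Finset.sum_add_sum_compl M σ
    rw [hσ1, ← hp] at h2
    have h3 : ∑ x ∈ Mᶜ, σ x = ∑ k : {i : Fin n // i ∉ M}, σ k.1 :=
      Finset.sum_subtype Mᶜ (fun x => Finset.mem_compl) σ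
    linarith
  -- the real vectors
  obtain ⟨vv, hvv⟩ : ∃ vv : {i : Fin n // i ∉ M} → Fin n → ℝ,
      ∀ k x, vv k x = if h : x ∉ M then S₀ ⟨x, h⟩ k else 0 := ⟨_, fun k x => rfl⟩
  obtain ⟨ww, hww⟩ : ∃ ww : {i : Fin n // i ∉ M} → Fin n → ℝ,
      ∀ k x, ww k x = if h : x ∉ M then T₀ ⟨x, h⟩ k else 0 := ⟨_, fun k x => rfl⟩
  obtain ⟨Dt, hDt⟩ : ∃ Dt : Matrix (Fin n) (Fin n) ℝ,
      ∀ x y, Dt x y = if x ∈ M then (if y = x then 1 else 0)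
        else (if y ∈ M then 0 else 𝒟 x y) := ⟨Matrix.of _, fun x y => rfl⟩
  have hS₀' : S₀ᵀ * S₀ = 1 := by
    rw [← Matrix.transpose_transpose S₀] ; exact mul_eq_one_comm.mp (by rwa [Matrix.transpose_transpose])
  have hT₀' : T₀ᵀ * T₀ = 1 := by
    rw [← Matrix.transpose_transpose T₀] ; exact mul_eq_one_comm.mp (by rwa [Matrix.transpose_transpose])
  -- orthonormality of vv, ww
  have hvvon : ∀ k l, ∑ x, vv k x * vv l x = if k = l then 1 else 0 := by
    intro k l
    have h1 : ∀ x : Fin n, vv k x * vv l x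
        = if h : x ∉ M then S₀ ⟨x, h⟩ k * S₀ ⟨x, h⟩ l else 0 := by
      intro x
      by_cases h : x ∉ M <;> simp [hvv, h]
    rw [Finset.sum_congr rfl fun x _ => h1 x,
      sum_dite_notmem' M (fun j => S₀ j k * S₀ j l)]
    have := congrFun (congrFun hS₀' k) l
    rw [Matrix.mul_apply] at this
    simp only [Matrix.transpose_apply] at this
    rw [this, Matrix.one_apply]
  have hwwon : ∀ k l, ∑ x, ww k x * ww l x = if k = l then 1 else 0 := by
    intro k l
    have h1 : ∀ x : Fin n, ww k x * ww l x
        = if h : x ∉ M then T₀ ⟨x, h⟩ k * T₀ ⟨x, h⟩ l else 0 := by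
      intro x
      by_cases h : x ∉ M <;> simp [hww, h]
    rw [Finset.sum_congr rfl fun x _ => h1 x,
      sum_dite_notmem' M (fun j => T₀ j k * T₀ j l)]
    have := congrFun (congrFun hT₀' k) l
    rw [Matrix.mul_apply] at this
    simp only [Matrix.transpose_apply] at this
    rw [this, Matrix.one_apply]
  -- SVD action
  have hDmT : Dm * T₀ = S₀ * Matrix.diagonal ξ := by
    rw [hsvd, mul_assoc, hT₀', mul_one]
  have hDmS : Dmᵀ * S₀ = T₀ * Matrix.diagonal ξ := by
    rw [hsvd]
    have h1 : (S₀ * Matrix.diagonal ξ * T₀ᵀ)ᵀ = T₀ * ((Matrix.diagonal ξ)ᵀ * S₀ᵀ) := by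
      rw [Matrix.transpose_mul, Matrix.transpose_mul, Matrix.transpose_transpose]
    rw [h1, Matrix.diagonal_transpose, mul_assoc, mul_assoc, hS₀', mul_one]
  have hDtw : ∀ k, Dt *ᵥ ww k = ξ k • vv k := by
    intro k
    funext x
    rw [Matrix.mulVec, dotProduct]
    by_cases hx : x ∈ M
    · have h1 : ∀ y : Fin n, Dt x y * ww k y = if y = x then ww k x else 0 := by
        intro y
        by_cases hy : y = x <;> simp [hDt, hx, hy]
      rw [Finset.sum_congr rfl fun y _ => h1 y, Finset.sum_ite_eq' Finset.univ x]
      simp [hww, hx, hvv, Pi.smul_apply]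
    · have h1 : ∀ y : Fin n, Dt x y * ww k y
          = if h : y ∉ M then Dm ⟨x, hx⟩ ⟨y, h⟩ * T₀ ⟨y, h⟩ k else 0 := by
        intro y
        by_cases hy : y ∉ M
        · rw [hDt, hww, hDm, if_neg hx, dif_pos hy, if_neg hy]
          simp [Matrix.submatrix_apply, hy]
        · rw [not_not] at hy
          rw [hDt, hww, if_neg hx, if_pos hy, dif_neg (not_not_intro hy), zero_mul,
            dif_neg (not_not_intro hy)]
      rw [Finset.sum_congr rfl fun y _ => h1 y,
        sum_dite_notmem' M (fun j => Dm ⟨x, hx⟩ j * T₀ j k)]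
      have h2 := congrFun (congrFun hDmT ⟨x, hx⟩) k
      rw [Matrix.mul_apply] at h2
      rw [h2, Matrix.mul_diagonal]
      simp [hvv, hx, Pi.smul_apply, mul_comm]
  have hDtv : ∀ k, Dtᵀ *ᵥ vv k = ξ k • ww k := by
    intro k
    funext y
    rw [Matrix.mulVec, dotProduct]
    simp only [Matrix.transpose_apply]
    by_cases hy : y ∈ M
    · have h1 : ∀ x : Fin n, Dt x y * vv k x = 0 := by
        intro x
        by_cases hx : x ∈ M
        · simp [hvv, hx]
        · simp [hDt, hx, hy]
      rw [Finset.sum_congr rfl fun x _ => h1 x, Finset.sum_const_zero]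
      simp [hww, hy, Pi.smul_apply]
    · have h1 : ∀ x : Fin n, Dt x y * vv k x
          = if h : x ∉ M then Dm ⟨x, h⟩ ⟨y, hy⟩ * S₀ ⟨x, h⟩ k else 0 := by
        intro x
        by_cases hx : x ∉ M
        · rw [hDt, hvv, hDm, if_neg hx, dif_pos hx, if_neg hy]
          simp [Matrix.submatrix_apply, hx]
        · rw [not_not] at hx
          have hyx : ¬(y = x) := by rintro rfl; exact hy hx
          rw [hDt, hvv, if_pos hx, if_neg hyx, dif_neg (not_not_intro hx), zero_mul,
            dif_neg (not_not_intro hx)]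
      rw [Finset.sum_congr rfl fun x _ => h1 x,
        sum_dite_notmem' M (fun j => Dm j ⟨y, hy⟩ * S₀ j k)]
      have h2 := congrFun (congrFun hDmS ⟨y, hy⟩) k
      rw [Matrix.mul_apply] at h2
      simp only [Matrix.transpose_apply] at h2
      rw [h2, Matrix.mul_diagonal]
      simp [hww, hy, Pi.smul_apply, mul_comm]
  -- complex matrix identities
  have hstarC : ∀ t : ℝ, star ((t : ℝ) : ℂ) = ((t : ℝ) : ℂ) := fun t => by
    rw [Complex.star_def, Complex.conj_ofReal]
  have hsqP : ∀ x y : Fin n, ((Real.sqrt (P x y) : ℝ) : ℂ) * ((Real.sqrt (P x y) : ℝ) : ℂ)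
      = ((P x y : ℝ) : ℂ) := by
    intro x y
    rw [← Complex.ofReal_mul, Real.mul_self_sqrt (hP0 x y)]
  have hsqPs : ∀ y x : Fin n, ((Real.sqrt (Pstar y x) : ℝ) : ℂ) * ((Real.sqrt (Pstar y x) : ℝ) : ℂ)
      = ((Pstar y x : ℝ) : ℂ) := by
    intro y x
    rw [← Complex.ofReal_mul, Real.mul_self_sqrt (hPs0 y x)]
  have hAA : Atilᴴ * Atil = (1 : Matrix (Fin n) (Fin n) ℂ) := by
    ext x x'
    rw [Matrix.mul_apply, Matrix.one_apply]
    simp only [Matrix.conjTranspose_apply, hAtil]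
    by_cases hx : x ∈ M <;> by_cases hx' : x' ∈ M <;> simp only [hx, hx', if_true, if_false]
    · have h1 : ∀ q : Fin n × Fin n,
          star (if q = (x, x) then (1:ℂ) else 0) * (if q = (x', x') then (1:ℂ) else 0)
          = if q = (x, x) then (if q = (x', x') then (1:ℂ) else 0) else 0 := by
        intro q
        by_cases h : q = (x, x) <;> simp [h]
      rw [Finset.sum_congr rfl (fun q _ => h1 q),
        Finset.sum_ite_eq' Finset.univ ((x, x) : Fin n × Fin n)
          (fun q => if q = (x', x') then (1:ℂ) else 0)]
      simp [Prod.ext_iff]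
    · have hxx' : x ≠ x' := fun h => hx' (h ▸ hx)
      trans (0:ℂ)
      · apply Finset.sum_eq_zero
        intro q _
        by_cases h : q = (x, x)
        · subst h
          simp [hxx']
        · simp [h]
      · rw [if_neg hxx']
    · have hxx' : x ≠ x' := fun h => hx (h ▸ hx')
      trans (0:ℂ)
      · apply Finset.sum_eq_zero
        intro q _
        by_cases h : q = (x', x')
        · subst h
          simp [Ne.symm hxx']
        · simp [h]
      · rw [if_neg hxx']
    · have h1 : ∀ q : Fin n × Fin n,
          star (if q.1 = x then ((Real.sqrt (P q.1 q.2) : ℝ) : ℂ) else 0) *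
            (if q.1 = x' then ((Real.sqrt (P q.1 q.2) : ℝ) : ℂ) else 0)
          = if q.1 = x then (if x = x' then ((P x q.2 : ℝ) : ℂ) else 0) else 0 := by
        intro q
        by_cases h : q.1 = x
        · rw [if_pos h, if_pos h]
          by_cases h' : x = x'
          · rw [if_pos (h.trans h'), if_pos h', h, hstarC, hsqP]
          · rw [if_neg (fun hc => h' (h.symm.trans hc)), if_neg h', mul_zero]
        · rw [if_neg h, if_neg h, star_zero, zero_mul]
      rw [Finset.sum_congr rfl (fun q _ => h1 q),
        sum_fst_ite' x (fun b => if x = x' then ((P x b : ℝ) : ℂ) else 0)]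
      by_cases h' : x = x'
      · rw [if_pos h', Finset.sum_ite_of_true (fun _ _ => h'), ← Complex.ofReal_sum, hP1 x]
        simp
      · rw [if_neg h', Finset.sum_ite_of_false (fun _ _ => h'), Finset.sum_const_zero]
  have hBB : Btilᴴ * Btil = (1 : Matrix (Fin n) (Fin n) ℂ) := by
    ext y y'
    rw [Matrix.mul_apply, Matrix.one_apply]
    simp only [Matrix.conjTranspose_apply, hBtil]
    by_cases hy : y ∈ M <;> by_cases hy' : y' ∈ M <;> simp only [hy, hy', if_true, if_false]
    · have h1 : ∀ q : Fin n × Fin n,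
          star (if q = (y, y) then (1:ℂ) else 0) * (if q = (y', y') then (1:ℂ) else 0)
          = if q = (y, y) then (if q = (y', y') then (1:ℂ) else 0) else 0 := by
        intro q
        by_cases h : q = (y, y) <;> simp [h]
      rw [Finset.sum_congr rfl (fun q _ => h1 q),
        Finset.sum_ite_eq' Finset.univ ((y, y) : Fin n × Fin n)
          (fun q => if q = (y', y') then (1:ℂ) else 0)]
      simp [Prod.ext_iff]
    · have hyy' : y ≠ y' := fun h => hy' (h ▸ hy)
      trans (0:ℂ)
      · apply Finset.sum_eq_zero
        intro q _
        by_cases h : q = (y, y)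
        · subst h
          simp [hyy']
        · simp [h]
      · rw [if_neg hyy']
    · have hyy' : y ≠ y' := fun h => hy (h ▸ hy')
      trans (0:ℂ)
      · apply Finset.sum_eq_zero
        intro q _
        by_cases h : q = (y', y')
        · subst h
          simp [Ne.symm hyy']
        · simp [h]
      · rw [if_neg hyy']
    · have h1 : ∀ q : Fin n × Fin n,
          star (if q.2 = y then ((Real.sqrt (Pstar q.2 q.1) : ℝ) : ℂ) else 0) *
            (if q.2 = y' then ((Real.sqrt (Pstar q.2 q.1) : ℝ) : ℂ) else 0)
          = if q.2 = y then (if y = y' then ((Pstar y q.1 : ℝ) : ℂ) else 0) else 0 := by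
        intro q
        by_cases h : q.2 = y
        · rw [if_pos h, if_pos h]
          by_cases h' : y = y'
          · rw [if_pos (h.trans h'), if_pos h', h, hstarC, hsqPs]
          · rw [if_neg (fun hc => h' (h.symm.trans hc)), if_neg h', mul_zero]
        · rw [if_neg h, if_neg h, star_zero, zero_mul]
      rw [Finset.sum_congr rfl (fun q _ => h1 q),
        sum_snd_ite' y (fun a => if y = y' then ((Pstar y a : ℝ) : ℂ) else 0)]
      by_cases h' : y = y'
      · rw [if_pos h', Finset.sum_ite_of_true (fun _ _ => h'), ← Complex.ofReal_sum, hPsrow y]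
        simp
      · rw [if_neg h', Finset.sum_ite_of_false (fun _ _ => h'), Finset.sum_const_zero]
  obtain ⟨DtC, hDtC⟩ : ∃ DtC : Matrix (Fin n) (Fin n) ℂ,
      ∀ x y, DtC x y = ((Dt x y : ℝ) : ℂ) := ⟨Matrix.of _, fun _ _ => rfl⟩
  have hAB : Atilᴴ * Btil = DtC := by
    ext x y
    rw [Matrix.mul_apply, hDtC, hDt]
    simp only [Matrix.conjTranspose_apply, hAtil, hBtil]
    by_cases hx : x ∈ M <;> by_cases hy : y ∈ M <;> simp only [hx, hy, if_true, if_false]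
    · -- both marked : δ
      have h1 : ∀ q : Fin n × Fin n,
          star (if q = (x, x) then (1:ℂ) else 0) * (if q = (y, y) then (1:ℂ) else 0)
          = if q = (x, x) then (if q = (y, y) then (1:ℂ) else 0) else 0 := by
        intro q
        by_cases h : q = (x, x) <;> simp [h]
      rw [Finset.sum_congr rfl (fun q _ => h1 q),
        Finset.sum_ite_eq' Finset.univ ((x, x) : Fin n × Fin n)
          (fun q => if q = (y, y) then (1:ℂ) else 0)]
      by_cases h : y = x
      · subst h
        simp
      · simp [Prod.ext_iff, Ne.symm h, h]
    · have hxy : x ≠ y := fun h => hy (h ▸ hx)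
      trans (0:ℂ)
      · apply Finset.sum_eq_zero
        intro q _
        by_cases h : q = (x, x)
        · subst h
          simp [hxy]
        · simp [h]
      · rw [if_neg (Ne.symm hxy)]
        simp
    · have hxy : x ≠ y := fun h => hx (h ▸ hy)
      trans (0:ℂ)
      · apply Finset.sum_eq_zero
        intro q _
        by_cases h : q = (y, y)
        · subst h
          simp [Ne.symm hxy]
        · simp [h]
      · simp
    · have h1 : ∀ q : Fin n × Fin n,
          star (if q.1 = x then ((Real.sqrt (P q.1 q.2) : ℝ) : ℂ) else 0) *
            (if q.2 = y then ((Real.sqrt (Pstar q.2 q.1) : ℝ) : ℂ) else 0)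
          = if q = ((x, y) : Fin n × Fin n)
              then ((Real.sqrt (P x y) : ℝ) : ℂ) * ((Real.sqrt (Pstar y x) : ℝ) : ℂ) else 0 := by
        intro q
        by_cases h1 : q.1 = x
        · by_cases h2 : q.2 = y
          · have hq : q = (x, y) := Prod.ext h1 h2
            rw [if_pos h1, if_pos h2, if_pos hq, hstarC, h1, h2]
          · have hq : ¬(q = (x, y)) := fun hc => h2 (by rw [hc])
            rw [if_pos h1, if_neg h2, if_neg hq, mul_zero]
        · have hq : ¬(q = (x, y)) := fun hc => h1 (by rw [hc])
          rw [if_neg h1, if_neg hq, star_zero, zero_mul]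
      rw [Finset.sum_congr rfl (fun q _ => h1 q),
        Finset.sum_ite_eq' Finset.univ ((x, y) : Fin n × Fin n)
          (fun _ => ((Real.sqrt (P x y) : ℝ) : ℂ) * ((Real.sqrt (Pstar y x) : ℝ) : ℂ))]
      rw [if_pos (Finset.mem_univ _), ← Complex.ofReal_mul, ← Real.sqrt_mul (hP0 x y), ← h𝒟]
  have hBA : Btilᴴ * Atil = DtCᵀ := by
    have h1 := congrArg Matrix.conjTranspose hAB
    rw [Matrix.conjTranspose_mul, Matrix.conjTranspose_conjTranspose] at h1
    rw [h1]
    ext y x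
    rw [Matrix.conjTranspose_apply, Matrix.transpose_apply, hDtC, hstarC]
  -- complex vectors
  obtain ⟨vC, hvC⟩ : ∃ vC : {i : Fin n // i ∉ M} → Fin n → ℂ,
      ∀ k x, vC k x = ((vv k x : ℝ) : ℂ) := ⟨_, fun _ _ => rfl⟩
  obtain ⟨wC, hwC⟩ : ∃ wC : {i : Fin n // i ∉ M} → Fin n → ℂ,
      ∀ k x, wC k x = ((ww k x : ℝ) : ℂ) := ⟨_, fun _ _ => rfl⟩
  obtain ⟨aa, haa⟩ : ∃ aa : {i : Fin n // i ∉ M} → Fin n × Fin n → ℂ,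
      ∀ k, aa k = Atil *ᵥ vC k := ⟨_, fun _ => rfl⟩
  obtain ⟨bb, hbb⟩ : ∃ bb : {i : Fin n // i ∉ M} → Fin n × Fin n → ℂ,
      ∀ k, bb k = Btil *ᵥ wC k := ⟨_, fun _ => rfl⟩
  have hvCdot : ∀ k l, star (vC k) ⬝ᵥ vC l = if k = l then 1 else 0 := by
    intro k l
    have h1 : star (vC k) ⬝ᵥ vC l = ((∑ x, vv k x * vv l x : ℝ) : ℂ) := by
      rw [dotProduct, Complex.ofReal_sum]
      refine Finset.sum_congr rfl fun x _ => ?_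
      rw [Pi.star_apply, hvC, hvC, hstarC, ← Complex.ofReal_mul]
    rw [h1, hvvon]
    split_ifs <;> simp
  have hwCdot : ∀ k l, star (wC k) ⬝ᵥ wC l = if k = l then 1 else 0 := by
    intro k l
    have h1 : star (wC k) ⬝ᵥ wC l = ((∑ x, ww k x * ww l x : ℝ) : ℂ) := by
      rw [dotProduct, Complex.ofReal_sum]
      refine Finset.sum_congr rfl fun x _ => ?_
      rw [Pi.star_apply, hwC, hwC, hstarC, ← Complex.ofReal_mul]
    rw [h1, hwwon]
    split_ifs <;> simp
  have hDtCw : ∀ k, DtC *ᵥ wC k = ((ξ k : ℝ) : ℂ) • vC k := by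
    intro k
    funext x
    rw [Matrix.mulVec, dotProduct]
    have h1 : ∀ y, DtC x y * wC k y = ((Dt x y * ww k y : ℝ) : ℂ) := by
      intro y
      rw [hDtC, hwC, ← Complex.ofReal_mul]
    rw [Finset.sum_congr rfl fun y _ => h1 y, ← Complex.ofReal_sum]
    have h2 : ∑ y, Dt x y * ww k y = ξ k * vv k x := by
      have h3 := congrFun (hDtw k) x
      rw [Matrix.mulVec, dotProduct] at h3
      rw [h3, Pi.smul_apply, smul_eq_mul]
    rw [h2, Pi.smul_apply, hvC, smul_eq_mul, ← Complex.ofReal_mul]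
  have hDtCv : ∀ k, DtCᵀ *ᵥ vC k = ((ξ k : ℝ) : ℂ) • wC k := by
    intro k
    funext y
    rw [Matrix.mulVec, dotProduct]
    have h1 : ∀ x, DtCᵀ y x * vC k x = ((Dtᵀ y x * vv k x : ℝ) : ℂ) := by
      intro x
      rw [Matrix.transpose_apply, Matrix.transpose_apply, hDtC, hvC, ← Complex.ofReal_mul]
    rw [Finset.sum_congr rfl fun x _ => h1 x, ← Complex.ofReal_sum]
    have h2 : ∑ x, Dtᵀ y x * vv k x = ξ k * ww k y := by
      have h3 := congrFun (hDtv k) y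
      rw [Matrix.mulVec, dotProduct] at h3
      rw [h3, Pi.smul_apply, smul_eq_mul]
    rw [h2, Pi.smul_apply, hwC, smul_eq_mul, ← Complex.ofReal_mul]
  -- dot products between aa, bb
  have hipaa : ∀ k l, star (aa k) ⬝ᵥ aa l = if k = l then 1 else 0 := by
    intro k l
    rw [haa, haa, dot_helper', hAA, Matrix.one_mulVec, hvCdot]
  have hipbb : ∀ k l, star (bb k) ⬝ᵥ bb l = if k = l then 1 else 0 := by
    intro k l
    rw [hbb, hbb, dot_helper', hBB, Matrix.one_mulVec, hwCdot]
  have hipab : ∀ k l, star (aa k) ⬝ᵥ bb l = if k = l then ((ξ k : ℝ) : ℂ) else 0 := by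
    intro k l
    rw [haa, hbb, dot_helper', hAB, hDtCw, dotProduct_smul, hvCdot]
    by_cases h : k = l
    · subst h
      simp
    · simp [h]
  have hipba : ∀ k l, star (bb k) ⬝ᵥ aa l = if k = l then ((ξ k : ℝ) : ℂ) else 0 := by
    intro k l
    rw [hbb, haa, dot_helper', hBA, hDtCv, dotProduct_smul, hwCdot]
    by_cases h : k = l
    · subst h
      simp
    · simp [h]
  -- dot with ξ₀
  have hipa0 : ∀ k, star (aa k) ⬝ᵥ ξ₀ = ((ν k : ℝ) : ℂ) := by
    intro k
    rw [haa, dot_helper2']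
    have hgA : ∀ x, (Atilᴴ *ᵥ ξ₀) x = if x ∈ M then ((Real.sqrt (σ x * P x x) : ℝ) : ℂ)
        else ((Real.sqrt (σ x) : ℝ) : ℂ) := by
      intro x
      rw [Matrix.mulVec, dotProduct]
      by_cases hx : x ∈ M
      · have h1 : ∀ q : Fin n × Fin n, Matrix.conjTranspose Atil x q * ξ₀ q
            = if q = (x, x) then ξ₀ q else 0 := by
          intro q
          rw [Matrix.conjTranspose_apply, hAtil, if_pos hx]
          by_cases h : q = (x, x)
          · rw [if_pos h, if_pos h, star_one, one_mul]
          · rw [if_neg h, if_neg h, star_zero, zero_mul]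
        rw [Finset.sum_congr rfl fun q _ => h1 q,
          Finset.sum_ite_eq' Finset.univ ((x, x) : Fin n × Fin n) ξ₀]
        rw [if_pos (Finset.mem_univ _), if_pos hx, hξ₀]
      · have h1 : ∀ q : Fin n × Fin n, Matrix.conjTranspose Atil x q * ξ₀ q
            = if q.1 = x then ((Real.sqrt (P x q.2) * Real.sqrt (σ x * P x q.2) : ℝ) : ℂ)
              else 0 := by
          intro q
          rw [Matrix.conjTranspose_apply, hAtil, if_neg hx, hξ₀]
          by_cases h : q.1 = x
          · rw [if_pos h, if_pos h, hstarC, ← Complex.ofReal_mul, h]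
          · rw [if_neg h, if_neg h, star_zero, zero_mul]
        rw [Finset.sum_congr rfl fun q _ => h1 q,
          sum_fst_ite' x (fun b => ((Real.sqrt (P x b) * Real.sqrt (σ x * P x b) : ℝ) : ℂ)),
          if_neg hx, ← Complex.ofReal_sum]
        congr 1
        have h2 : ∀ b, Real.sqrt (P x b) * Real.sqrt (σ x * P x b)
            = Real.sqrt (σ x) * P x b := by
          intro b
          rw [Real.sqrt_mul (hσ0 x).le, ← mul_assoc, mul_comm (Real.sqrt (P x b)),
            mul_assoc, Real.mul_self_sqrt (hP0 x b)]
        rw [Finset.sum_congr rfl fun b _ => h2 b, ← Finset.mul_sum, hP1 x, mul_one]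
    have h1 : ∀ x : Fin n, star (vC k) x * (Atilᴴ *ᵥ ξ₀) x
        = if h : x ∉ M then ((S₀ ⟨x, h⟩ k * Real.sqrt (σ x) : ℝ) : ℂ) else 0 := by
      intro x
      rw [Pi.star_apply, hgA x]
      by_cases h : x ∉ M
      · rw [dif_pos h, if_neg h, hvC, hvv, dif_pos h, hstarC, ← Complex.ofReal_mul]
      · rw [not_not] at h
        rw [dif_neg (not_not_intro h), hvC, hvv, dif_neg (not_not_intro h)]
        simp
    rw [dotProduct]
    rw [Finset.sum_congr rfl fun x _ => h1 x,
      sum_dite_notmem' M (fun j => ((S₀ j k * Real.sqrt (σ j.1) : ℝ) : ℂ))]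
    rw [← Complex.ofReal_sum]
    congr 1
    have h2 := congrFun hν k
    rw [Matrix.mulVec, dotProduct] at h2
    rw [h2]
    exact Finset.sum_congr rfl fun j _ => by rw [Matrix.transpose_apply]
  -- reality of bb ⬝ᵥ ξ₀
  have hBtreal : ∀ q y, ∃ t : ℝ, Btil q y = ((t : ℝ) : ℂ) := by
    intro q y
    rw [hBtil]
    split_ifs
    · exact ⟨1, by norm_num⟩
    · exact ⟨0, by norm_num⟩
    · exact ⟨_, rfl⟩
    · exact ⟨0, by norm_num⟩
  choose tB htB using hBtreal
  obtain ⟨γ, hγ⟩ : ∃ γ : {i : Fin n // i ∉ M} → ℝ,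
      ∀ k, star (bb k) ⬝ᵥ ξ₀ = ((γ k : ℝ) : ℂ) := by
    refine ⟨fun k => ∑ q : Fin n × Fin n,
      (∑ y, tB q y * ww k y) * Real.sqrt (σ q.1 * P q.1 q.2), fun k => ?_⟩
    rw [dotProduct, Complex.ofReal_sum]
    refine Finset.sum_congr rfl fun q _ => ?_
    have h1 : bb k q = ((∑ y, tB q y * ww k y : ℝ) : ℂ) := by
      rw [hbb, Matrix.mulVec, dotProduct, Complex.ofReal_sum]
      refine Finset.sum_congr rfl fun y _ => ?_
      rw [htB, hwC, ← Complex.ofReal_mul]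
    rw [Pi.star_apply, h1, hstarC, hξ₀, ← Complex.ofReal_mul]
  -- scalars
  obtain ⟨sg, hsg⟩ : ∃ sg : Bool → ℝ, ∀ s, sg s = if s then 1 else -1 := ⟨_, fun _ => rfl⟩
  have hsgnot : ∀ s, sg (!s) = - sg s := by
    intro s
    cases s <;> simp [hsg]
  obtain ⟨ε, hε⟩ : ∃ ε : {i : Fin n // i ∉ M} → Bool → ℂ,
      ∀ k s, ε k s = Complex.exp (((sg s * θ k : ℝ) : ℂ) * Complex.I) := ⟨_, fun _ _ => rfl⟩
  have hεprod : ∀ k s, ε k s * ε k (!s) = 1 := by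
    intro k s
    rw [hε, hε, ← Complex.exp_add, hsgnot]
    have h1 : ((sg s * θ k : ℝ) : ℂ) * Complex.I + ((-sg s * θ k : ℝ) : ℂ) * Complex.I = 0 := by
      push_cast
      ring
    rw [h1, Complex.exp_zero]
  have hεsum : ∀ k s, ε k s + ε k (!s) = 2 * ((ξ k : ℝ) : ℂ) := by
    intro k s
    rw [hε, hε, hsgnot, Complex.exp_mul_I, Complex.exp_mul_I]
    have h1 : ((-sg s * θ k : ℝ) : ℂ) = -((sg s * θ k : ℝ) : ℂ) := by
      push_cast
      ring
    rw [h1, Complex.cos_neg, Complex.sin_neg, ← Complex.ofReal_cos]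
    have h3 : Real.cos (sg s * θ k) = ξ k := by
      cases s
      · have : sg false = -1 := by simp [hsg]
        rw [this, neg_one_mul, Real.cos_neg, hcos]
      · have : sg true = 1 := by simp [hsg]
        rw [this, one_mul, hcos]
    rw [h3]
    ring
  have hstarε : ∀ k s, star (ε k s) = ε k (!s) := by
    intro k s
    rw [hε, hε, hsgnot, Complex.star_def, ← Complex.exp_conj]
    congr 1
    rw [_root_.map_mul, Complex.conj_I, Complex.conj_ofReal]
    push_cast
    ring
  -- eigenvectors
  obtain ⟨uu, huu⟩ : ∃ uu : {i : Fin n // i ∉ M} → Bool → Fin n × Fin n → ℂ,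
      ∀ k s, uu k s = aa k - ε k s • bb k := ⟨_, fun _ _ => rfl⟩
  -- reflection actions
  have hAv : ∀ k, Atilᴴ *ᵥ aa k = vC k := by
    intro k
    rw [haa, Matrix.mulVec_mulVec, hAA, Matrix.one_mulVec]
  have hAb : ∀ k, Atilᴴ *ᵥ bb k = ((ξ k : ℝ) : ℂ) • vC k := by
    intro k
    rw [hbb, Matrix.mulVec_mulVec, hAB, hDtCw]
  have hBb : ∀ k, Btilᴴ *ᵥ bb k = wC k := by
    intro k
    rw [hbb, Matrix.mulVec_mulVec, hBB, Matrix.one_mulVec]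
  have hBa : ∀ k, Btilᴴ *ᵥ aa k = ((ξ k : ℝ) : ℂ) • wC k := by
    intro k
    rw [haa, Matrix.mulVec_mulVec, hBA, hDtCv]
  have hRAv : ∀ v : Fin n × Fin n → ℂ, ((2 : ℂ) • (Atil * Atilᴴ) - 1) *ᵥ v
      = (2:ℂ) • (Atil *ᵥ (Atilᴴ *ᵥ v)) - v := by
    intro v
    rw [Matrix.sub_mulVec, Matrix.smul_mulVec, Matrix.one_mulVec, Matrix.mulVec_mulVec]
  have hRBv : ∀ v : Fin n × Fin n → ℂ, ((2 : ℂ) • (Btil * Btilᴴ) - 1) *ᵥ v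
      = (2:ℂ) • (Btil *ᵥ (Btilᴴ *ᵥ v)) - v := by
    intro v
    rw [Matrix.sub_mulVec, Matrix.smul_mulVec, Matrix.one_mulVec, Matrix.mulVec_mulVec]
  have hRAa : ∀ k, ((2 : ℂ) • (Atil * Atilᴴ) - 1) *ᵥ aa k = aa k := by
    intro k
    rw [hRAv, hAv, ← haa]
    module
  have hRAb : ∀ k, ((2 : ℂ) • (Atil * Atilᴴ) - 1) *ᵥ bb k
      = (2 * ((ξ k : ℝ) : ℂ)) • aa k - bb k := by
    intro k
    rw [hRAv, hAb, Matrix.mulVec_smul, ← haa]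
    module
  have hRBb : ∀ k, ((2 : ℂ) • (Btil * Btilᴴ) - 1) *ᵥ bb k = bb k := by
    intro k
    rw [hRBv, hBb, ← hbb]
    module
  have hRBa : ∀ k, ((2 : ℂ) • (Btil * Btilᴴ) - 1) *ᵥ aa k
      = (2 * ((ξ k : ℝ) : ℂ)) • bb k - aa k := by
    intro k
    rw [hRBv, hBa, Matrix.mulVec_smul, ← hbb]
    module
  -- eigen relations
  have hWu : ∀ k s, Wtil *ᵥ uu k s = (ε k s ^ 2) • uu k s := by
    intro k s
    have hq : ε k s ^ 2 - 2 * ((ξ k : ℝ) : ℂ) * ε k s + 1 = 0 := by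
      linear_combination ε k s * hεsum k s - hεprod k s
    have hstep1 : ((2 : ℂ) • (Atil * Atilᴴ) - 1) *ᵥ uu k s
        = ((1:ℂ) - 2 * ((ξ k : ℝ) : ℂ) * ε k s) • aa k + ε k s • bb k := by
      rw [huu, Matrix.mulVec_sub, Matrix.mulVec_smul, hRAa, hRAb]
      match_scalars <;> ring
    rw [hWtil, ← Matrix.mulVec_mulVec, hstep1, Matrix.mulVec_add, Matrix.mulVec_smul,
      Matrix.mulVec_smul, hRBa, hRBb, huu]
    match_scalars
    · linear_combination (ε k s + 2*((ξ k : ℝ) : ℂ)) * hq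
    · linear_combination -hq
  have hWtu : ∀ k s (t : ℕ), (Wtil ^ t) *ᵥ uu k s = ((ε k s ^ 2) ^ t) • uu k s := by
    intro k s t
    induction t with
    | zero => simp [Matrix.one_mulVec]
    | succ t ih =>
      rw [pow_succ, ← Matrix.mulVec_mulVec, hWu, Matrix.mulVec_smul, ih, smul_smul,
        ← pow_succ']
  have hWHu : ∀ k s, Wtilᴴ *ᵥ uu k s = (ε k (!s) ^ 2) • uu k s := by
    intro k s
    have hWH : Wtilᴴ = ((2 : ℂ) • (Atil * Atilᴴ) - 1) * ((2 : ℂ) • (Btil * Btilᴴ) - 1) := by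
      rw [hWtil, Matrix.conjTranspose_mul]
      congr 1
      · rw [Matrix.conjTranspose_sub, Matrix.conjTranspose_smul, Matrix.conjTranspose_one,
          Matrix.conjTranspose_mul, Matrix.conjTranspose_conjTranspose]
        norm_num
      · rw [Matrix.conjTranspose_sub, Matrix.conjTranspose_smul, Matrix.conjTranspose_one,
          Matrix.conjTranspose_mul, Matrix.conjTranspose_conjTranspose]
        norm_num
    have hstep1 : ((2 : ℂ) • (Btil * Btilᴴ) - 1) *ᵥ uu k s
        = ((-1:ℂ)) • aa k + (2 * ((ξ k : ℝ) : ℂ) - ε k s) • bb k := by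
      rw [huu, Matrix.mulVec_sub, Matrix.mulVec_smul, hRBa, hRBb]
      match_scalars <;> ring
    rw [hWH, ← Matrix.mulVec_mulVec, hstep1, Matrix.mulVec_add, Matrix.mulVec_smul,
      Matrix.mulVec_smul, hRAa, hRAb, huu]
    match_scalars
    · linear_combination hεprod k s - (2*((ξ k : ℝ) : ℂ) + ε k (!s)) * hεsum k s
    · linear_combination hεsum k s + ε k (!s) * hεprod k s
  have hWHtu : ∀ k s (t : ℕ), (Wtilᴴ ^ t) *ᵥ uu k s = ((ε k (!s) ^ 2) ^ t) • uu k s := by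
    intro k s t
    induction t with
    | zero => simp [Matrix.one_mulVec]
    | succ t ih =>
      rw [pow_succ, ← Matrix.mulVec_mulVec, hWHu, Matrix.mulVec_smul, ih, smul_smul,
        ← pow_succ']
  have hipW : ∀ k s (t : ℕ), star (uu k s) ⬝ᵥ ((Wtil ^ t) *ᵥ ξ₀)
      = ((ε k s ^ 2) ^ t) * (star (uu k s) ⬝ᵥ ξ₀) := by
    intro k s t
    have h2 : star ((Wtil ^ t)ᴴ *ᵥ uu k s) = ((ε k s ^ 2) ^ t) • star (uu k s) := by
      rw [Matrix.conjTranspose_pow, hWHtu, star_smul]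
      congr 1
      rw [star_pow, star_pow, hstarε, Bool.not_not]
    calc star (uu k s) ⬝ᵥ ((Wtil ^ t) *ᵥ ξ₀)
        = (star (uu k s) ᵥ* (Wtil ^ t)) ⬝ᵥ ξ₀ := Matrix.dotProduct_mulVec _ _ _
      _ = star ((Wtil ^ t)ᴴ *ᵥ uu k s) ⬝ᵥ ξ₀ := by
          rw [Matrix.star_mulVec, Matrix.conjTranspose_conjTranspose]
      _ = (((ε k s ^ 2) ^ t) • star (uu k s)) ⬝ᵥ ξ₀ := by rw [h2]
      _ = ((ε k s ^ 2) ^ t) * (star (uu k s) ⬝ᵥ ξ₀) := by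
          rw [smul_dotProduct, smul_eq_mul]
  -- dot products of uu
  have hipu0 : ∀ k s, star (uu k s) ⬝ᵥ ξ₀ = ((ν k : ℝ) : ℂ) - ε k (!s) * ((γ k : ℝ) : ℂ) := by
    intro k s
    rw [huu, star_sub, sub_dotProduct, star_smul, smul_dotProduct, hipa0, hγ,
      hstarε, smul_eq_mul]
  have hipuu : ∀ k s l s', star (uu k s) ⬝ᵥ uu l s'
      = if k = l then (if s = s' then 2 - 2 * ((ξ k : ℝ):ℂ)^2 else 0) else 0 := by
    intro k s l s'
    rw [huu, huu, star_sub, sub_dotProduct, star_smul, smul_dotProduct,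
      dotProduct_sub, dotProduct_sub, dotProduct_smul,
      dotProduct_smul, hipaa, hipab, hipba, hipbb, hstarε]
    by_cases h : k = l
    · subst h
      simp only [eq_self_iff_true, if_true]
      by_cases hs : s = s'
      · subst hs
        simp only [eq_self_iff_true, if_true, smul_eq_mul]
        have h1 := hεsum k s
        have h2 := hεprod k s
        linear_combination (-((ξ k : ℝ) : ℂ)) * h1 + h2
      · rw [if_neg hs]
        have hss' : s' = !s := by
          cases s <;> cases s' <;> first | rfl | exact absurd rfl hs
        subst hss'
        have h1 := hεsum k (!s)
        rw [Bool.not_not] at h1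
        have h2 := hεprod k (!s)
        rw [Bool.not_not] at h2
        simp only [smul_eq_mul]
        linear_combination (ε k (!s)) * h1 - h2
    · simp only [h, if_false]
      simp
  -- Euclidean space bridge
  have hsinpos : ∀ k, 0 < Real.sin (θ k) := fun k => Real.sin_pos_of_pos_of_lt_pi (hθ k).1
    (lt_of_le_of_lt (hθ k).2 (by linarith [Real.pi_pos]))
  obtain ⟨cc, hcc⟩ : ∃ cc : {i : Fin n // i ∉ M} → ℝ,
      ∀ k, cc k = (Real.sqrt 2 * Real.sin (θ k))⁻¹ := ⟨_, fun _ => rfl⟩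
  have hccpos : ∀ k, 0 < cc k := by
    intro k
    rw [hcc]
    have := hsinpos k
    positivity
  obtain ⟨toE, htoE⟩ : ∃ toE : (Fin n × Fin n → ℂ) → EuclideanSpace ℂ (Fin n × Fin n),
      ∀ x q, toE x q = x q := ⟨fun x => WithLp.toLp 2 x, fun _ _ => rfl⟩
  have hnormE : ∀ x : Fin n × Fin n → ℂ, ∑ q, ‖x q‖^2 = ‖toE x‖^2 := by
    intro x
    rw [EuclideanSpace.norm_eq, Real.sq_sqrt (by positivity)]
    exact Finset.sum_congr rfl fun q _ => by rw [htoE]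
  have hinnerE : ∀ x y : Fin n × Fin n → ℂ, (inner ℂ (toE x) (toE y) : ℂ) = star x ⬝ᵥ y := by
    intro x y
    rw [PiLp.inner_apply, dotProduct]
    refine Finset.sum_congr rfl fun q _ => ?_
    rw [RCLike.inner_apply', htoE, htoE, Pi.star_apply, Complex.star_def]
  obtain ⟨ee, hee⟩ : ∃ ee : ({i : Fin n // i ∉ M} × Bool) → EuclideanSpace ℂ (Fin n × Fin n),
      ∀ i, ee i = toE (((cc i.1 : ℝ) : ℂ) • uu i.1 i.2) := ⟨_, fun _ => rfl⟩
  have horth : Orthonormal ℂ ee := by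
    rw [orthonormal_iff_ite]
    rintro ⟨k, s⟩ ⟨l, s'⟩
    rw [hee, hee, hinnerE, star_smul, smul_dotProduct, dotProduct_smul, hipuu,
      hstarC]
    by_cases h : k = l
    · subst h
      simp only [eq_self_iff_true, if_true]
      by_cases hs : s = s'
      · subst hs
        simp only [eq_self_iff_true, if_true, Prod.mk.injEq, and_self, smul_eq_mul]
        have hval : (cc k)^2 * (2 - 2*(ξ k)^2) = 1 := by
          rw [hcc, ← hcos k]
          have hs2 : Real.sqrt 2 ^ 2 = 2 := Real.sq_sqrt (by norm_num)
          have hsc := Real.sin_sq_add_cos_sq (θ k)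
          have hsp := hsinpos k
          field_simp
          nlinarith [hs2, hsc, hsp]
        have hvalC : (((cc k)^2 * (2 - 2*(ξ k)^2) : ℝ) : ℂ) = 1 := by rw [hval]; norm_num
        push_cast at hvalC
        linear_combination hvalC
      · rw [if_neg hs, if_neg (by simp [Prod.ext_iff, hs] : ¬((k,s) = (k,s')))]
        simp
    · rw [if_neg h, if_neg (by simp [Prod.ext_iff, h] : ¬((k,s) = (l,s')))]
      simp
  -- norm computations
  have hnormμ : ∀ k s (t : ℕ), ‖(ε k s ^ 2)^t - 1‖^2 = 2 - 2*Real.cos (2*θ k*t) := by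
    intro k s t
    have h1 : (ε k s ^ 2)^t = Complex.exp (((sg s * (2*θ k*t) : ℝ) : ℂ) * Complex.I) := by
      rw [hε, ← pow_mul, ← Complex.exp_nat_mul]
      congr 1
      push_cast
      ring
    have h2 : (ε k s ^ 2)^t - 1
        = ((Real.cos (sg s * (2*θ k*t)) - 1 : ℝ) : ℂ)
          + ((Real.sin (sg s * (2*θ k*t)) : ℝ) : ℂ) * Complex.I := by
      rw [h1, Complex.exp_mul_I, ← Complex.ofReal_cos, ← Complex.ofReal_sin]
      push_cast
      ring
    rw [h2]
    have h3 : Real.cos (sg s * (2*θ k*t)) = Real.cos (2*θ k*t) := by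
      cases s
      · have : sg false = -1 := by simp [hsg]
        rw [this, neg_one_mul, Real.cos_neg]
      · have : sg true = 1 := by simp [hsg]
        rw [this, one_mul]
    have h4 := Real.sin_sq_add_cos_sq (sg s * (2*θ k*t))
    rw [Complex.sq_norm, Complex.normSq_add_mul_I]
    rw [← h3]
    linear_combination h4
  have hnormip : ∀ k s, ‖star (uu k s) ⬝ᵥ ξ₀‖^2
      = ν k^2 - 2*ξ k*ν k*γ k + γ k^2 := by
    intro k s
    rw [hipu0]
    have h1 : ((ν k : ℝ) : ℂ) - ε k (!s) * ((γ k : ℝ) : ℂ)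
        = ((ν k - γ k * Real.cos (sg (!s) * θ k) : ℝ) : ℂ)
          + ((-(γ k * Real.sin (sg (!s) * θ k)) : ℝ) : ℂ) * Complex.I := by
      rw [hε, Complex.exp_mul_I, ← Complex.ofReal_cos, ← Complex.ofReal_sin]
      push_cast
      ring
    have hc : Real.cos (sg (!s) * θ k) = ξ k := by
      cases s
      · have : sg (!false) = 1 := by simp [hsg]
        rw [this, one_mul, hcos]
      · have : sg (!true) = -1 := by simp [hsg]
        rw [this, neg_one_mul, Real.cos_neg, hcos]
    have hsq := Real.sin_sq_add_cos_sq (sg (!s) * θ k)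
    rw [hc] at hsq
    rw [h1, Complex.sq_norm, Complex.normSq_add_mul_I, hc]
    linear_combination (γ k^2) * hsq
  -- key per-(t,k) estimate
  have hkey : ∀ (t : ℕ) (k : {i : Fin n // i ∉ M}),
      (2 - 2*Real.cos (2*θ k*t)) * ν k^2
      ≤ ∑ s : Bool, ‖(inner ℂ (ee (k, s)) (toE ((Wtil^t) *ᵥ ξ₀ - ξ₀)) : ℂ)‖^2 := by
    intro t k
    have hterm : ∀ s : Bool, ‖(inner ℂ (ee (k, s)) (toE ((Wtil^t) *ᵥ ξ₀ - ξ₀)) : ℂ)‖^2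
        = cc k^2 * ((2 - 2*Real.cos (2*θ k*t)) * (ν k^2 - 2*ξ k*ν k*γ k + γ k^2)) := by
      intro s
      rw [hee, hinnerE, star_smul, smul_dotProduct, dotProduct_sub, hipW, hstarC,
        smul_eq_mul]
      have h5 : (ε k s^2)^t * (star (uu k s) ⬝ᵥ ξ₀) - star (uu k s) ⬝ᵥ ξ₀
          = ((ε k s^2)^t - 1) * (star (uu k s) ⬝ᵥ ξ₀) := by ring
      rw [h5, norm_mul, norm_mul, mul_pow, mul_pow, hnormμ, hnormip, Complex.norm_real,
        Real.norm_eq_abs, abs_of_pos (hccpos k)]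
    have hfac : 0 ≤ 2 - 2*Real.cos (2*θ k*t) := by nlinarith [Real.cos_le_one (2*θ k*t)]
    have hsin2 : Real.sin (θ k)^2 = 1 - ξ k^2 := by
      rw [← hcos k]
      nlinarith [Real.sin_sq_add_cos_sq (θ k)]
    have hQ : ν k^2 * Real.sin (θ k)^2 ≤ ν k^2 - 2*ξ k*ν k*γ k + γ k^2 := by
      nlinarith [sq_nonneg (ξ k*ν k - γ k), hsin2]
    have hss : Real.sin (θ k)^2 * (2 * cc k^2) = 1 := by
      rw [hcc]
      have hs2 : Real.sqrt 2 ^ 2 = 2 := Real.sq_sqrt (by norm_num)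
      have hsp := hsinpos k
      field_simp
      nlinarith [hs2, hsp]
    have key2 : ν k^2 ≤ 2*cc k^2 * (ν k^2 - 2*ξ k*ν k*γ k + γ k^2) := by
      calc ν k^2 = ν k^2 * (Real.sin (θ k)^2 * (2*cc k^2)) := by rw [hss, mul_one]
        _ = (ν k^2 * Real.sin (θ k)^2) * (2*cc k^2) := by ring
        _ ≤ (ν k^2 - 2*ξ k*ν k*γ k + γ k^2) * (2*cc k^2) :=
            mul_le_mul_of_nonneg_right hQ (by positivity)
        _ = 2*cc k^2 * (ν k^2 - 2*ξ k*ν k*γ k + γ k^2) := by ring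
    calc (2 - 2*Real.cos (2*θ k*t)) * ν k^2
        ≤ (2 - 2*Real.cos (2*θ k*t)) * (2*cc k^2 * (ν k^2 - 2*ξ k*ν k*γ k + γ k^2)) :=
          mul_le_mul_of_nonneg_left key2 hfac
      _ = ∑ s : Bool, cc k^2 * ((2 - 2*Real.cos (2*θ k*t)) * (ν k^2 - 2*ξ k*ν k*γ k + γ k^2)) := by
          rw [Fintype.sum_bool]
          ring
      _ = ∑ s : Bool, ‖(inner ℂ (ee (k, s)) (toE ((Wtil^t) *ᵥ ξ₀ - ξ₀)) : ℂ)‖^2 :=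
          (Finset.sum_congr rfl fun s _ => (hterm s)).symm
  -- Bessel estimate for each t
  have hBesselT : ∀ t : ℕ, ∑ k, (2 - 2*Real.cos (2*θ k*t)) * ν k^2
      ≤ ∑ q, ‖((Wtil^t) *ᵥ ξ₀ - ξ₀) q‖^2 := by
    intro t
    have hb := horth.sum_inner_products_le (s := Finset.univ) (toE ((Wtil^t) *ᵥ ξ₀ - ξ₀))
    rw [← hnormE] at hb
    calc ∑ k, (2 - 2*Real.cos (2*θ k*t)) * ν k^2
        ≤ ∑ k, ∑ s : Bool, ‖(inner ℂ (ee (k, s)) (toE ((Wtil^t) *ᵥ ξ₀ - ξ₀)) : ℂ)‖^2 :=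
          Finset.sum_le_sum fun k _ => hkey t k
      _ = ∑ i : {i : Fin n // i ∉ M} × Bool,
            ‖(inner ℂ (ee i) (toE ((Wtil^t) *ᵥ ξ₀ - ξ₀)) : ℂ)‖^2 := by
          rw [Fintype.sum_prod_type]
      _ ≤ ∑ q, ‖((Wtil^t) *ᵥ ξ₀ - ξ₀) q‖^2 := hb
  -- sum of ν²
  have hnusq : ∑ k, ν k^2 = 1 - p := by
    have h1 : ν ⬝ᵥ ν = 1 - p := by
      nth_rewrite 2 [hν]
      rw [Matrix.dotProduct_mulVec, Matrix.vecMul_transpose, hν, Matrix.mulVec_mulVec, hS₀,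
        Matrix.one_mulVec]
      rw [dotProduct]
      rw [Finset.sum_congr rfl fun j (_ : j ∈ Finset.univ) =>
        Real.mul_self_sqrt (hσ0 j.1).le]
      exact hσsub
    rw [← h1, dotProduct]
    exact Finset.sum_congr rfl fun k _ => sq (ν k)
  have hθpos : ∀ k, 0 < θ k := fun k => (hθ k).1
  have hSθ0 : 0 ≤ ∑ k, ν k^2/θ k :=
    Finset.sum_nonneg fun k _ => div_nonneg (sq_nonneg _) (hθpos k).le
  have hlow : 2/Real.pi * (1-p) ≤ ∑ k, ν k^2/θ k := by
    have h1 : ∀ k : {i : Fin n // i ∉ M}, 2/Real.pi * ν k^2 ≤ ν k^2/θ k := by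
      intro k
      have h2 : ν k^2 / (Real.pi/2) ≤ ν k^2 / θ k :=
        div_le_div_of_nonneg_left (sq_nonneg _) (hθpos k) (hθ k).2
      calc 2/Real.pi * ν k^2 = ν k^2 / (Real.pi/2) := by
            have hπ := Real.pi_pos
            field_simp
        _ ≤ ν k^2 / θ k := h2
    calc 2/Real.pi * (1-p) = ∑ k, 2/Real.pi * ν k^2 := by
          rw [← Finset.mul_sum, hnusq]
      _ ≤ ∑ k, ν k^2/θ k := Finset.sum_le_sum fun k _ => h1 k
  -- jordan bound on the cosine sums
  have hsinlow : ∀ k, 2 * (1 / Real.sin (θ k)) ≤ Real.pi / θ k := by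
    intro k
    have hj := Real.mul_le_sin (hθpos k).le (hθ k).2
    have h2 : 0 < 2 / Real.pi * θ k := by
      have := Real.pi_pos
      have := hθpos k
      positivity
    have h3 : 1 / Real.sin (θ k) ≤ 1 / (2 / Real.pi * θ k) :=
      one_div_le_one_div_of_le h2 hj
    calc 2 * (1 / Real.sin (θ k)) ≤ 2 * (1 / (2 / Real.pi * θ k)) := by linarith
      _ = Real.pi / θ k := by
          have hπ := Real.pi_pos
          have hθk := hθpos k
          field_simp
  -- main estimate
  have hmain : ∀ T : ℕ, 32/(1-p) * (∑ k, ν k^2/θ k) ≤ (T:ℝ)+1 → Fσ T ≥ 1 - p := by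
    intro T hT
    have hτpos : (0:ℝ) < (T:ℝ)+1 := by positivity
    have hper : ∀ k : {i : Fin n // i ∉ M},
        2*((T:ℝ)+1)*ν k^2 - Real.pi * (ν k^2/θ k)
        ≤ ∑ t ∈ Finset.range (T+1), (2 - 2*Real.cos (2*θ k*t)) * ν k^2 := by
      intro k
      have h1 : ∀ t : ℕ, (2 - 2*Real.cos (2*θ k*t)) * ν k^2
          = 2*ν k^2 - 2*ν k^2*Real.cos (2*θ k*t) := fun t => by ring
      rw [Finset.sum_congr rfl fun t _ => h1 t, Finset.sum_sub_distrib, Finset.sum_const,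
        Finset.card_range, ← Finset.mul_sum]
      have h2 := cos_sum_le' (θ k) (hθpos k) (hθ k).2 (T+1)
      have h3 : 2*ν k^2 * ∑ t ∈ Finset.range (T+1), Real.cos (2*θ k*t)
          ≤ 2*ν k^2 * (1 / Real.sin (θ k)) := by
        apply mul_le_mul_of_nonneg_left _ (by positivity)
        exact h2
      have h4 : 2*ν k^2 * (1 / Real.sin (θ k)) ≤ ν k^2 * (Real.pi / θ k) := by
        have h5 := hsinlow k
        have h6 : ν k^2 * (2 * (1 / Real.sin (θ k))) ≤ ν k^2 * (Real.pi / θ k) :=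
          mul_le_mul_of_nonneg_left h5 (sq_nonneg _)
        linarith [h6]
      have h7 : Real.pi * (ν k^2/θ k) = ν k^2 * (Real.pi / θ k) := by
        ring
      rw [nsmul_eq_mul]
      push_cast
      linarith [h3, h4, h7]
    have hsum : 2*((T:ℝ)+1)*(1-p) - Real.pi * (∑ k, ν k^2/θ k)
        ≤ ∑ t ∈ Finset.range (T+1), ∑ q, ‖((Wtil^t) *ᵥ ξ₀ - ξ₀) q‖^2 := by
      calc 2*((T:ℝ)+1)*(1-p) - Real.pi * (∑ k, ν k^2/θ k)
          = ∑ k, (2*((T:ℝ)+1)*ν k^2 - Real.pi * (ν k^2/θ k)) := by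
            rw [Finset.sum_sub_distrib, ← Finset.mul_sum, hnusq, ← Finset.mul_sum]
        _ ≤ ∑ k, ∑ t ∈ Finset.range (T+1), (2 - 2*Real.cos (2*θ k*t)) * ν k^2 :=
            Finset.sum_le_sum fun k _ => hper k
        _ = ∑ t ∈ Finset.range (T+1), ∑ k, (2 - 2*Real.cos (2*θ k*t)) * ν k^2 :=
            Finset.sum_comm
        _ ≤ ∑ t ∈ Finset.range (T+1), ∑ q, ‖((Wtil^t) *ᵥ ξ₀ - ξ₀) q‖^2 :=
            Finset.sum_le_sum fun t _ => hBesselT t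
    have hT' : 32 * (∑ k, ν k^2/θ k) ≤ (1-p) * ((T:ℝ)+1) := by
      rw [div_mul_eq_mul_div, div_le_iff₀ h1p] at hT
      linarith [hT]
    have hS2 : (1-p) * ((T:ℝ)+1) ≤ ∑ t ∈ Finset.range (T+1), ∑ q, ‖((Wtil^t) *ᵥ ξ₀ - ξ₀) q‖^2 := by
      have hπ4 := Real.pi_le_four
      have hπ0 := Real.pi_pos
      have h8 : Real.pi * (∑ k, ν k^2/θ k) ≤ 4 * (∑ k, ν k^2/θ k) :=
        mul_le_mul_of_nonneg_right (by linarith) hSθ0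
      nlinarith [hsum, hT', hSθ0]
    rw [hFσ, ge_iff_le]
    calc 1 - p = 1/((T:ℝ)+1) * ((1-p) * ((T:ℝ)+1)) := by field_simp
      _ ≤ 1/((T:ℝ)+1) * ∑ t ∈ Finset.range (T+1), ∑ q, ‖((Wtil^t) *ᵥ ξ₀ - ξ₀) q‖^2 :=
          mul_le_mul_of_nonneg_left hS2 (by positivity)
  -- conclusion
  have hB0 : 0 ≤ 64 / (1 - p) * ∑ k, ν k ^ 2 / θ k := by positivity
  have hBineq : 32/(1-p) * (∑ k, ν k^2/θ k) = (64 / (1 - p) * ∑ k, ν k ^ 2 / θ k) / 2 := by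
    ring
  constructor
  · intro T hT
    apply hmain
    rw [hBineq]
    have := hB0
    linarith [hT]
  · -- bound on the infimum
    have hB2 : (2:ℝ) ≤ 32/(1-p) * (∑ k, ν k^2/θ k) := by
      have h1 : 32/(1-p) * (2/Real.pi * (1-p)) ≤ 32/(1-p) * (∑ k, ν k^2/θ k) :=
        mul_le_mul_of_nonneg_left hlow (by positivity)
      have h2 : 32/(1-p) * (2/Real.pi * (1-p)) = 64/Real.pi := by
        field_simp
        ring
      have hπ4 := Real.pi_le_four
      have hπ0 := Real.pi_pos
      have h3 : (2:ℝ) ≤ 64/Real.pi := by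
        rw [le_div_iff₀ hπ0]
        linarith
      linarith [h1, h2 ▸ h1, h3]
    set B2 : ℝ := 32/(1-p) * (∑ k, ν k^2/θ k) with hB2def
    have hB2nn : 0 ≤ B2 := by positivity
    have hmem : ⌈B2⌉₊ ∈ {T : ℕ | Fσ T ≥ 1 - p} := by
      apply hmain
      have := Nat.le_ceil B2
      linarith [this]
    have hinf : sInf {T : ℕ | Fσ T ≥ 1 - p} ≤ ⌈B2⌉₊ := Nat.sInf_le hmem
    have hcast : ((sInf {T : ℕ | Fσ T ≥ 1 - p} : ℕ) : ℝ) ≤ (⌈B2⌉₊ : ℝ) := by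
      exact_mod_cast hinf
    have hceil : (⌈B2⌉₊ : ℝ) < B2 + 1 := Nat.ceil_lt_add_one hB2nn
    have hfinal : B2 + 1 ≤ 64 / (1 - p) * ∑ k, ν k ^ 2 / θ k := by
      have : 64 / (1 - p) * ∑ k, ν k ^ 2 / θ k = 2 * B2 := by
        rw [hB2def]
        ring
      rw [this]
      linarith [hB2]
    linarith [hcast, hceil, hfinal]
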